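/- arXiv:1709.09042 — 4 statements merged into one kernel-verified Lean document; each statement's English description precedes it below -/
import Mathlib

section
/- Let A be a real 2×2 matrix satisfying the ellipticity condition a_{ij} ξ_i ξ_j ≥ λ|ξ|² for all ξ ∈ ℝ² with λ ∈ (0,1]. Define η = [(a_{11} - a_{22}) + i(a_{12} + a_{21})]/det(A + I) and ν = [(det A - 1) + i(a_{21} - a_{12})]/det(A + I). Then |η| + |ν| ≤ K where K = (√(tr(A)² - 4λ²) + √((det A + 1)² - 4λ²))/(tr A + det A + 1), and K < 1. -/
/-- Bound on the Beltrami coefficients associated to an elliptic matrix. -/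
theorem stmt1 (a11 a12 a21 a22 lam : ℝ) (hlam : 0 < lam) (hlam1 : lam ≤ 1)
    (hell : ∀ ξ1 ξ2 : ℝ,
      lam * (ξ1 ^ 2 + ξ2 ^ 2) ≤
        a11 * ξ1 ^ 2 + a12 * ξ1 * ξ2 + a21 * ξ2 * ξ1 + a22 * ξ2 ^ 2) :
    let d : ℝ := (a11 * a22 - a12 * a21) + (a11 + a22) + 1
    let η : ℂ := (((a11 - a22) / d : ℝ) : ℂ) + Complex.I * (((a12 + a21) / d : ℝ) : ℂ)
    let ν : ℂ := (((a11 * a22 - a12 * a21 - 1) / d : ℝ) : ℂ) +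
      Complex.I * (((a21 - a12) / d : ℝ) : ℂ)
    let K : ℝ := (Real.sqrt ((a11 + a22) ^ 2 - 4 * lam ^ 2) +
      Real.sqrt ((a11 * a22 - a12 * a21 + 1) ^ 2 - 4 * lam ^ 2)) / d
    ‖η‖ + ‖ν‖ ≤ K ∧ K < 1 := by
  intro d η ν K
  have h1 : lam ≤ a11 := by have := hell 1 0; nlinarith
  have h2 : lam ≤ a22 := by have := hell 0 1; nlinarith
  have hdisc : (a12 + a21) ^ 2 ≤ 4 * ((a11 - lam) * (a22 - lam)) := by
    have h := discrim_le_zero (a := a11 - lam) (b := a12 + a21) (c := a22 - lam)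
      (fun x => by have := hell x 1; nlinarith)
    rw [discrim] at h
    nlinarith [h]
  have hd : d = (a11 * a22 - a12 * a21) + (a11 + a22) + 1 := rfl
  have hprod : 0 ≤ lam * (a11 + a22 - 2 * lam) := by
    apply mul_nonneg hlam.le; linarith
  have hDpos : lam ^ 2 ≤ a11 * a22 - a12 * a21 := by
    nlinarith [sq_nonneg (a12 - a21), hdisc]
  have hdpos : 0 < d := by rw [hd]; nlinarith
  have hNη : (a11 - a22) ^ 2 + (a12 + a21) ^ 2 ≤ (a11 + a22) ^ 2 - 4 * lam ^ 2 := by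
    nlinarith [hdisc]
  have hNν : (a11 * a22 - a12 * a21 - 1) ^ 2 + (a21 - a12) ^ 2 ≤
      (a11 * a22 - a12 * a21 + 1) ^ 2 - 4 * lam ^ 2 := by
    nlinarith [hdisc, sq_nonneg (a12 - a21)]
  have hNη0 : (0:ℝ) ≤ (a11 + a22) ^ 2 - 4 * lam ^ 2 := le_trans (by positivity) hNη
  have hNν0 : (0:ℝ) ≤ (a11 * a22 - a12 * a21 + 1) ^ 2 - 4 * lam ^ 2 :=
    le_trans (by positivity) hNν
  have habsη : ‖η‖ ≤ Real.sqrt ((a11 + a22) ^ 2 - 4 * lam ^ 2) / d := by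
    show ‖(↑((a11 - a22) / d) + Complex.I * ↑((a12 + a21) / d) : ℂ)‖ ≤ _
    rw [mul_comm Complex.I, Complex.norm_add_mul_I]
    calc Real.sqrt (((a11 - a22) / d) ^ 2 + ((a12 + a21) / d) ^ 2)
        ≤ Real.sqrt (((a11 + a22) ^ 2 - 4 * lam ^ 2) / d ^ 2) := by
          apply Real.sqrt_le_sqrt
          rw [div_pow, div_pow, ← add_div]
          gcongr
      _ = _ := by rw [Real.sqrt_div hNη0, Real.sqrt_sq hdpos.le]
  have habsν : ‖ν‖ ≤
      Real.sqrt ((a11 * a22 - a12 * a21 + 1) ^ 2 - 4 * lam ^ 2) / d := by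
    show ‖(↑((a11 * a22 - a12 * a21 - 1) / d) + Complex.I * ↑((a21 - a12) / d) : ℂ)‖ ≤ _
    rw [mul_comm Complex.I, Complex.norm_add_mul_I]
    calc Real.sqrt (((a11 * a22 - a12 * a21 - 1) / d) ^ 2 + ((a21 - a12) / d) ^ 2)
        ≤ Real.sqrt (((a11 * a22 - a12 * a21 + 1) ^ 2 - 4 * lam ^ 2) / d ^ 2) := by
          apply Real.sqrt_le_sqrt
          rw [div_pow, div_pow, ← add_div]
          gcongr
      _ = _ := by rw [Real.sqrt_div hNν0, Real.sqrt_sq hdpos.le]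
  have hK : K = (Real.sqrt ((a11 + a22) ^ 2 - 4 * lam ^ 2) +
      Real.sqrt ((a11 * a22 - a12 * a21 + 1) ^ 2 - 4 * lam ^ 2)) / d := rfl
  constructor
  · rw [hK, add_div]; exact add_le_add habsη habsν
  · rw [hK, div_lt_one hdpos, hd]
    have s1 : Real.sqrt ((a11 + a22) ^ 2 - 4 * lam ^ 2) < a11 + a22 := by
      have := Real.sqrt_lt_sqrt hNη0 (show (a11 + a22) ^ 2 - 4 * lam ^ 2 < (a11 + a22) ^ 2 by nlinarith)
      rwa [Real.sqrt_sq (by linarith)] at this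
    have s2 : Real.sqrt ((a11 * a22 - a12 * a21 + 1) ^ 2 - 4 * lam ^ 2) <
        a11 * a22 - a12 * a21 + 1 := by
      have := Real.sqrt_lt_sqrt hNν0 (show (a11 * a22 - a12 * a21 + 1) ^ 2 - 4 * lam ^ 2
        < (a11 * a22 - a12 * a21 + 1) ^ 2 by nlinarith)
      rwa [Real.sqrt_sq (by nlinarith)] at this
    linarith
end

section
/- Let u(x,y) = exp(-r) where r = √(x²+y²), and define V = (1/3)(1 - r^{-1}), W₁ = (1/3)(x/r, y/r), W₂ = -(1/3)(1 - r^{-1})(x/r, y/r). Then -div(∇u + W₁u) + W₂·∇u + Vu = 0 on ℝ² \ {0}, W₁ is curl-free, and V - W₁·W₂ ≥ 0 everywhere on ℝ² \ {0} where r ≥ 1. -/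
/-- Partial derivative in the first variable. -/
noncomputable def pdx (f : ℝ × ℝ → ℝ) (p : ℝ × ℝ) : ℝ :=
  deriv (fun x => f (x, p.2)) p.1

/-- Partial derivative in the second variable. -/
noncomputable def pdy (f : ℝ × ℝ → ℝ) (p : ℝ × ℝ) : ℝ :=
  deriv (fun y => f (p.1, y)) p.2

lemma sqrt_hda (x a : ℝ) (h : 0 < x ^ 2 + a) :
    HasDerivAt (fun t : ℝ => Real.sqrt (t ^ 2 + a)) (x / Real.sqrt (x ^ 2 + a)) x := by
  have h1 : HasDerivAt (fun t : ℝ => t ^ 2 + a) (2 * x) x := by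
    simpa using (hasDerivAt_pow 2 x).add_const a
  have h2 := (Real.hasDerivAt_sqrt (ne_of_gt h)).comp x h1
  have hs : Real.sqrt (x ^ 2 + a) ≠ 0 := by positivity
  refine h2.congr_deriv ?_
  field_simp

lemma exp_hda (x a : ℝ) (h : 0 < x ^ 2 + a) :
    HasDerivAt (fun t : ℝ => Real.exp (-Real.sqrt (t ^ 2 + a)))
      (-(x / Real.sqrt (x ^ 2 + a)) * Real.exp (-Real.sqrt (x ^ 2 + a))) x := by
  have h2 := (Real.hasDerivAt_exp (-Real.sqrt (x ^ 2 + a))).comp x (sqrt_hda x a h).neg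
  refine h2.congr_deriv ?_
  ring

lemma exp_hda' (y a : ℝ) (h : 0 < a + y ^ 2) :
    HasDerivAt (fun t : ℝ => Real.exp (-Real.sqrt (a + t ^ 2)))
      (-(y / Real.sqrt (a + y ^ 2)) * Real.exp (-Real.sqrt (a + y ^ 2))) y := by
  simpa [add_comm] using exp_hda y a (by linarith)

lemma F_hda (c x a : ℝ) (h : 0 < x ^ 2 + a) :
    HasDerivAt (fun t : ℝ => c * (t / Real.sqrt (t ^ 2 + a)) * Real.exp (-Real.sqrt (t ^ 2 + a)))
      ((c * ((Real.sqrt (x ^ 2 + a) - x * (x / Real.sqrt (x ^ 2 + a))) / (x ^ 2 + a))) *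
          Real.exp (-Real.sqrt (x ^ 2 + a)) +
        (c * (x / Real.sqrt (x ^ 2 + a))) *
          (-(x / Real.sqrt (x ^ 2 + a)) * Real.exp (-Real.sqrt (x ^ 2 + a)))) x := by
  have hs : Real.sqrt (x ^ 2 + a) ≠ 0 := by positivity
  have hdiv : HasDerivAt (fun t : ℝ => t / Real.sqrt (t ^ 2 + a))
      ((1 * Real.sqrt (x ^ 2 + a) - x * (x / Real.sqrt (x ^ 2 + a))) / (Real.sqrt (x ^ 2 + a)) ^ 2) x :=
    (hasDerivAt_id x).div (sqrt_hda x a h) hs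
  have := (hdiv.const_mul c).mul (exp_hda x a h)
  refine this.congr_deriv ?_
  · rw [Real.sq_sqrt h.le]; ring

lemma F_hda' (c y a : ℝ) (h : 0 < a + y ^ 2) :
    HasDerivAt (fun t : ℝ => c * (t / Real.sqrt (a + t ^ 2)) * Real.exp (-Real.sqrt (a + t ^ 2)))
      ((c * ((Real.sqrt (a + y ^ 2) - y * (y / Real.sqrt (a + y ^ 2))) / (a + y ^ 2))) *
          Real.exp (-Real.sqrt (a + y ^ 2)) +
        (c * (y / Real.sqrt (a + y ^ 2))) *
          (-(y / Real.sqrt (a + y ^ 2)) * Real.exp (-Real.sqrt (a + y ^ 2)))) y := by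
  simpa [add_comm] using F_hda c y a (by linarith)

lemma key (s x y E : ℝ) (hs : s ≠ 0) (h2 : x^2+y^2 = s^2) :
  -( ((-2/3 * ((s - x*(x/s))/(x^2+y^2))) * E + (-2/3*(x/s)) * (-(x/s)*E))
   + ((-2/3 * ((s - y*(y/s))/(x^2+y^2))) * E + (-2/3*(y/s)) * (-(y/s)*E)) )
  + ( (-(1/3)*(1 - s⁻¹)*(x/s)) * (-(x/s)*E) + (-(1/3)*(1 - s⁻¹)*(y/s)) * (-(y/s)*E) )
  + (1/3)*(1 - s⁻¹)*E = 0 := by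
  rw [h2]
  field_simp
  linear_combination (E * (-3 - s)) * h2

/-- With `u = exp(-r)`, `V = (1/3)(1 - r⁻¹)`, `W₁ = (1/3)(x/r, y/r)`,
`W₂ = -(1/3)(1 - r⁻¹)(x/r, y/r)`, one has
`-div(∇u + W₁u) + W₂·∇u + Vu = 0` and `W₁` is curl-free on `ℝ² \ {0}`,
and `V - W₁·W₂ ≥ 0` where `r ≥ 1`. -/
theorem stmt6 :
    let r : ℝ × ℝ → ℝ := fun p => Real.sqrt (p.1 ^ 2 + p.2 ^ 2)
    let u : ℝ × ℝ → ℝ := fun p => Real.exp (-r p)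
    let V : ℝ × ℝ → ℝ := fun p => (1 / 3) * (1 - (r p)⁻¹)
    let W11 : ℝ × ℝ → ℝ := fun p => (1 / 3) * (p.1 / r p)
    let W12 : ℝ × ℝ → ℝ := fun p => (1 / 3) * (p.2 / r p)
    let W21 : ℝ × ℝ → ℝ := fun p => -(1 / 3) * (1 - (r p)⁻¹) * (p.1 / r p)
    let W22 : ℝ × ℝ → ℝ := fun p => -(1 / 3) * (1 - (r p)⁻¹) * (p.2 / r p)
    (∀ p : ℝ × ℝ, p ≠ 0 →
        -(pdx (fun q => pdx u q + W11 q * u q) p +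
            pdy (fun q => pdy u q + W12 q * u q) p) +
          (W21 p * pdx u p + W22 p * pdy u p) + V p * u p = 0) ∧
      (∀ p : ℝ × ℝ, p ≠ 0 → pdy W11 p - pdx W12 p = 0) ∧
      (∀ p : ℝ × ℝ, 1 ≤ r p →
        0 ≤ V p - (W11 p * W21 p + W12 p * W22 p)) := by
  intro r u V W11 W12 W21 W22
  have hpos : ∀ p : ℝ × ℝ, p ≠ 0 → 0 < p.1 ^ 2 + p.2 ^ 2 := by
    intro p hp
    have h01 : p.1 ≠ 0 ∨ p.2 ≠ 0 := by
      rcases eq_or_ne p.1 0 with h1 | h1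
      · exact Or.inr fun h2 => hp (Prod.ext h1 h2)
      · exact Or.inl h1
    rcases h01 with h | h
    · positivity
    · positivity
  have hpdxu : ∀ a b : ℝ, 0 < a ^ 2 + b ^ 2 →
      pdx u (a, b) = -(a / Real.sqrt (a ^ 2 + b ^ 2)) * Real.exp (-Real.sqrt (a ^ 2 + b ^ 2)) := by
    intro a b h
    exact (exp_hda a (b ^ 2) h).deriv
  have hpdyu : ∀ a b : ℝ, 0 < a ^ 2 + b ^ 2 →
      pdy u (a, b) = -(b / Real.sqrt (a ^ 2 + b ^ 2)) * Real.exp (-Real.sqrt (a ^ 2 + b ^ 2)) := by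
    intro a b h
    exact (exp_hda' b (a ^ 2) h).deriv
  refine ⟨?_, ?_, ?_⟩
  · rintro ⟨x, y⟩ hp
    have hxy : 0 < x ^ 2 + y ^ 2 := hpos _ hp
    set s := Real.sqrt (x ^ 2 + y ^ 2) with hsdef
    have hs0 : 0 < s := Real.sqrt_pos.mpr hxy
    have hs2 : x ^ 2 + y ^ 2 = s ^ 2 := (Real.sq_sqrt hxy.le).symm
    have hev1 : ∀ᶠ t in nhds x, 0 < t ^ 2 + y ^ 2 := by
      have hc : ContinuousAt (fun t : ℝ => t ^ 2 + y ^ 2) x := by fun_prop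
      exact hc (Ioi_mem_nhds hxy)
    have hev2 : ∀ᶠ t in nhds y, 0 < x ^ 2 + t ^ 2 := by
      have hc : ContinuousAt (fun t : ℝ => x ^ 2 + t ^ 2) y := by fun_prop
      exact hc (Ioi_mem_nhds hxy)
    have heq1 : (fun t => (fun q => pdx u q + W11 q * u q) (t, y)) =ᶠ[nhds x]
        (fun t => (-2/3 : ℝ) * (t / Real.sqrt (t ^ 2 + y ^ 2)) * Real.exp (-Real.sqrt (t ^ 2 + y ^ 2))) := by
      filter_upwards [hev1] with t ht
      simp only [W11, u, r, hpdxu t y ht]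
      ring
    have heq2 : (fun t => (fun q => pdy u q + W12 q * u q) (x, t)) =ᶠ[nhds y]
        (fun t => (-2/3 : ℝ) * (t / Real.sqrt (x ^ 2 + t ^ 2)) * Real.exp (-Real.sqrt (x ^ 2 + t ^ 2))) := by
      filter_upwards [hev2] with t ht
      simp only [W12, u, r, hpdyu x t ht]
      ring
    have hD1 : pdx (fun q => pdx u q + W11 q * u q) (x, y) =
        ((-2/3 : ℝ) * ((s - x * (x / s)) / (x ^ 2 + y ^ 2))) * Real.exp (-s) +
          ((-2/3 : ℝ) * (x / s)) * (-(x / s) * Real.exp (-s)) := by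
      show deriv (fun t => (fun q => pdx u q + W11 q * u q) (t, y)) x = _
      rw [heq1.deriv_eq]
      exact (F_hda (-2/3) x (y ^ 2) hxy).deriv
    have hD2 : pdy (fun q => pdy u q + W12 q * u q) (x, y) =
        ((-2/3 : ℝ) * ((s - y * (y / s)) / (x ^ 2 + y ^ 2))) * Real.exp (-s) +
          ((-2/3 : ℝ) * (y / s)) * (-(y / s) * Real.exp (-s)) := by
      show deriv (fun t => (fun q => pdy u q + W12 q * u q) (x, t)) y = _
      rw [heq2.deriv_eq]
      exact (F_hda' (-2/3) y (x ^ 2) hxy).deriv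
    have hux := hpdxu x y hxy
    have huy := hpdyu x y hxy
    simp only [W21, W22, V, u, r] at *
    rw [hD1, hD2, hux, huy]
    have := key s x y (Real.exp (-s)) (ne_of_gt hs0) hs2
    linear_combination this
  · rintro ⟨x, y⟩ hp
    have hxy : 0 < x ^ 2 + y ^ 2 := hpos _ hp
    have hs : Real.sqrt (x ^ 2 + y ^ 2) ≠ 0 := by positivity
    have h1 : pdy W11 (x, y) = (1/3 : ℝ) *
        ((0 * Real.sqrt (x ^ 2 + y ^ 2) - x * (y / Real.sqrt (x ^ 2 + y ^ 2))) /
          (Real.sqrt (x ^ 2 + y ^ 2)) ^ 2) := by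
      have hd : HasDerivAt (fun t : ℝ => x / Real.sqrt (x ^ 2 + t ^ 2))
          ((0 * Real.sqrt (x ^ 2 + y ^ 2) - x * (y / Real.sqrt (x ^ 2 + y ^ 2))) /
            (Real.sqrt (x ^ 2 + y ^ 2)) ^ 2) y := by
        have := (hasDerivAt_const y x).div
          (by simpa [add_comm] using sqrt_hda y (x ^ 2) (by linarith) :
            HasDerivAt (fun t : ℝ => Real.sqrt (x ^ 2 + t ^ 2)) (y / Real.sqrt (x ^ 2 + y ^ 2)) y) hs
        exact this
      exact (hd.const_mul (1/3 : ℝ)).deriv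
    have h2 : pdx W12 (x, y) = (1/3 : ℝ) *
        ((0 * Real.sqrt (x ^ 2 + y ^ 2) - y * (x / Real.sqrt (x ^ 2 + y ^ 2))) /
          (Real.sqrt (x ^ 2 + y ^ 2)) ^ 2) := by
      have hd : HasDerivAt (fun t : ℝ => y / Real.sqrt (t ^ 2 + y ^ 2))
          ((0 * Real.sqrt (x ^ 2 + y ^ 2) - y * (x / Real.sqrt (x ^ 2 + y ^ 2))) /
            (Real.sqrt (x ^ 2 + y ^ 2)) ^ 2) x :=
        (hasDerivAt_const x y).div (sqrt_hda x (y ^ 2) hxy) hs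
      exact (hd.const_mul (1/3 : ℝ)).deriv
    rw [h1, h2]
    ring
  · rintro ⟨x, y⟩ hr
    simp only [V, W11, W12, W21, W22, r] at *
    set s := Real.sqrt (x ^ 2 + y ^ 2) with hsdef
    have hs0 : 0 < s := lt_of_lt_of_le one_pos hr
    have e1 : 0 ≤ 1 - s⁻¹ := by
      have : s⁻¹ ≤ 1 := by
        rw [inv_le_one_iff₀]; right; exact hr
      linarith
    have hrw : (1/3 : ℝ) * (1 - s⁻¹) -
        ((1/3) * (x / s) * (-(1/3) * (1 - s⁻¹) * (x / s)) +
          (1/3) * (y / s) * (-(1/3) * (1 - s⁻¹) * (y / s))) =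
        (1 - s⁻¹) * (1/3 + (1/9) * ((x / s) ^ 2 + (y / s) ^ 2)) := by ring
    rw [hrw]
    exact mul_nonneg e1 (by positivity)
end

section
/- Three-ball inequality corollary: Under the hypotheses of the Hadamard three-quasi-circle theorem, for 0 < s₁ < s₂ < s₃ < s₀, one has ‖f‖_{L^∞(Q_{s₂})} ≤ ‖f‖_{L^∞(Q_{s₁})}^θ · ‖f‖_{L^∞(Q_{s₃})}^{1-θ}, where θ = log(s₃/s₂)/log(s₃/s₁). -/
/-- Three-ball inequality on quasi-balls: from the logarithmic convexity of
`N s = ‖f‖_{L^∞(Q_s)}` one obtains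
`‖f‖_{L^∞(Q_{s₂})} ≤ ‖f‖_{L^∞(Q_{s₁})}^θ ‖f‖_{L^∞(Q_{s₃})}^{1-θ}` with
`θ = log(s₃/s₂)/log(s₃/s₁)`. -/
theorem stmt9 (G : ℂ → ℝ) (f : ℂ → ℂ) (s₀ : ℝ) (N : ℝ → ℝ)
    (hN : ∀ s : ℝ, N s = sSup ((fun z => ‖f z‖) '' {z | G z ≤ Real.log s}))
    (hpos : ∀ s : ℝ, 0 < s → s < s₀ → 0 < N s)
    (hconv : ∀ s₁ s₂ s₃ : ℝ, 0 < s₁ → s₁ < s₂ → s₂ < s₃ → s₃ < s₀ →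
      Real.log (s₃ / s₁) * Real.log (N s₂) ≤
        Real.log (s₃ / s₂) * Real.log (N s₁) +
          Real.log (s₂ / s₁) * Real.log (N s₃)) :
    ∀ s₁ s₂ s₃ : ℝ, 0 < s₁ → s₁ < s₂ → s₂ < s₃ → s₃ < s₀ →
      N s₂ ≤ N s₁ ^ (Real.log (s₃ / s₂) / Real.log (s₃ / s₁)) *
        N s₃ ^ (1 - Real.log (s₃ / s₂) / Real.log (s₃ / s₁)) := by
  intro s₁ s₂ s₃ h1 h12 h23 h30
  have h2 : 0 < s₂ := h1.trans h12
  have h3 : 0 < s₃ := h2.trans h23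
  have hN1 : 0 < N s₁ := hpos s₁ h1 (h12.trans (h23.trans h30))
  have hN2 : 0 < N s₂ := hpos s₂ h2 (h23.trans h30)
  have hN3 : 0 < N s₃ := hpos s₃ h3 h30
  have hL : 0 < Real.log (s₃ / s₁) :=
    Real.log_pos ((one_lt_div h1).2 (h12.trans h23))
  set θ : ℝ := Real.log (s₃ / s₂) / Real.log (s₃ / s₁) with hθ
  have hsum : Real.log (s₂ / s₁) = Real.log (s₃ / s₁) - Real.log (s₃ / s₂) := by
    rw [Real.log_div (ne_of_gt h2) (ne_of_gt h1),
      Real.log_div (ne_of_gt h3) (ne_of_gt h1),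
      Real.log_div (ne_of_gt h3) (ne_of_gt h2)]
    ring
  have key : Real.log (N s₂) ≤ θ * Real.log (N s₁) + (1 - θ) * Real.log (N s₃) := by
    have h := hconv s₁ s₂ s₃ h1 h12 h23 h30
    rw [hsum] at h
    
    calc Real.log (N s₂)
        = Real.log (s₃ / s₁) * Real.log (N s₂) / Real.log (s₃ / s₁) := by
          field_simp
      _ ≤ (Real.log (s₃ / s₂) * Real.log (N s₁) +
            (Real.log (s₃ / s₁) - Real.log (s₃ / s₂)) * Real.log (N s₃)) /
            Real.log (s₃ / s₁) := by gcongr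
      _ = θ * Real.log (N s₁) + (1 - θ) * Real.log (N s₃) := by
          rw [hθ]; field_simp
  calc N s₂ = Real.exp (Real.log (N s₂)) := (Real.exp_log hN2).symm
    _ ≤ Real.exp (θ * Real.log (N s₁) + (1 - θ) * Real.log (N s₃)) :=
        Real.exp_le_exp.2 key
    _ = N s₁ ^ θ * N s₃ ^ (1 - θ) := by
        rw [Real.exp_add, Real.rpow_def_of_pos hN1, Real.rpow_def_of_pos hN3,
          mul_comm (Real.log (N s₁)), mul_comm (Real.log (N s₃))]
end

section
/- Quotient transformation: Let u, φ be C² functions on Ω ⊂ ℝ² with φ > 0, where u solves div(∇u + W₁u) = W₂·∇u + Vu and φ solves Δφ - (W₁ + W₂)·∇φ - (V - W₁·W₂)φ = 0. Then v = u/φ satisfies div(∇v + W₁v) + W₁·∇v + |W₁|²v = W₃·(∇v + W₁v), where W₃ = W₁ + W₂ - 2∇φ/φ. -/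
open Filter

lemma alg16 (u ux uy uxx uyy f fx fy fxx fyy w1 w2 p1 p2 w1x w2y V : ℝ) (hf : f ≠ 0)
    (H1 : uxx + (w1x * u + w1 * ux) + (uyy + (w2y * u + w2 * uy)) = (p1 * ux + p2 * uy) + V * u)
    (H2 : (fxx + fyy) - ((w1 + p1) * fx + (w2 + p2) * fy) - (V - (w1 * p1 + w2 * p2)) * f = 0) :
    ((uxx * f - u * fxx) * f ^ 2 - (ux * f - u * fx) * (2 * f * fx)) / (f ^ 2) ^ 2
      + (w1x * (u / f) + w1 * ((ux * f - u * fx) / f ^ 2))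
      + (((uyy * f - u * fyy) * f ^ 2 - (uy * f - u * fy) * (2 * f * fy)) / (f ^ 2) ^ 2
      + (w2y * (u / f) + w2 * ((uy * f - u * fy) / f ^ 2)))
      + (w1 * ((ux * f - u * fx) / f ^ 2) + w2 * ((uy * f - u * fy) / f ^ 2))
      + (w1 ^ 2 + w2 ^ 2) * (u / f) =
    (w1 + p1 - 2 * fx / f) * ((ux * f - u * fx) / f ^ 2 + w1 * (u / f)) +
      (w2 + p2 - 2 * fy / f) * ((uy * f - u * fy) / f ^ 2 + w2 * (u / f)) := by
  field_simp
  linear_combination f ^ 2 * H1 - u * f * H2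

lemma quotient_slice_deriv (U Φ A Ux Φx : ℝ → ℝ) (s : Set ℝ) (hs : IsOpen s) (t₀ : ℝ)
    (ht : t₀ ∈ s)
    (hU : ∀ x ∈ s, HasDerivAt U (Ux x) x) (hΦ : ∀ x ∈ s, HasDerivAt Φ (Φx x) x)
    (hne : ∀ x ∈ s, Φ x ≠ 0)
    (hUx : DifferentiableAt ℝ Ux t₀) (hΦx : DifferentiableAt ℝ Φx t₀)
    (hA : DifferentiableAt ℝ A t₀) :
    deriv (fun x => deriv (fun t => U t / Φ t) x + A x * (U x / Φ x)) t₀ =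
      ((deriv Ux t₀ * Φ t₀ - U t₀ * deriv Φx t₀) * Φ t₀ ^ 2
          - (Ux t₀ * Φ t₀ - U t₀ * Φx t₀) * (2 * Φ t₀ * Φx t₀)) / (Φ t₀ ^ 2) ^ 2
        + (deriv A t₀ * (U t₀ / Φ t₀)
          + A t₀ * ((Ux t₀ * Φ t₀ - U t₀ * Φx t₀) / Φ t₀ ^ 2)) := by
  have heq : (fun x => deriv (fun t => U t / Φ t) x + A x * (U x / Φ x)) =ᶠ[nhds t₀]
      fun x => (Ux x * Φ x - U x * Φx x) / Φ x ^ 2 + A x * (U x / Φ x) := by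
    filter_upwards [hs.mem_nhds ht] with x hx
    rw [show deriv (fun t => U t / Φ t) x = _ from ((hU x hx).div (hΦ x hx) (hne x hx)).deriv]
  have H := (((hUx.hasDerivAt.mul (hΦ t₀ ht)).sub ((hU t₀ ht).mul hΦx.hasDerivAt)).div
      ((hΦ t₀ ht).pow 2) (pow_ne_zero 2 (hne t₀ ht))).add
      (hA.hasDerivAt.mul ((hU t₀ ht).div (hΦ t₀ ht) (hne t₀ ht)))
  exact heq.deriv_eq.trans (H.deriv.trans (by simp only [Pi.pow_apply, Pi.div_apply, Pi.mul_apply, Pi.sub_apply]; push_cast; ring))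

lemma sliceX_hasDerivAt (u : ℝ × ℝ → ℝ) (x c : ℝ) (h : DifferentiableAt ℝ u (x, c)) :
    HasDerivAt (fun t => u (t, c)) (pdx u (x, c)) x := by
  have h1 : HasDerivAt (fun t => u (t, c)) (fderiv ℝ u (x, c) (1, 0)) x :=
    h.hasFDerivAt.comp_hasDerivAt x ((hasDerivAt_id x).prodMk (hasDerivAt_const x c))
  have h2 : pdx u (x, c) = fderiv ℝ u (x, c) (1, 0) := h1.deriv
  rw [h2]; exact h1

lemma sliceY_hasDerivAt (u : ℝ × ℝ → ℝ) (c y : ℝ) (h : DifferentiableAt ℝ u (c, y)) :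
    HasDerivAt (fun t => u (c, t)) (pdy u (c, y)) y := by
  have h1 : HasDerivAt (fun t => u (c, t)) (fderiv ℝ u (c, y) (0, 1)) y :=
    h.hasFDerivAt.comp_hasDerivAt y ((hasDerivAt_const y c).prodMk (hasDerivAt_id y))
  have h2 : pdy u (c, y) = fderiv ℝ u (c, y) (0, 1) := h1.deriv
  rw [h2]; exact h1

lemma pdx_sliceX_diff (Ω : Set (ℝ × ℝ)) (hΩ : IsOpen Ω) (u : ℝ × ℝ → ℝ)
    (hu : ContDiffOn ℝ 2 u Ω) (x c : ℝ) (h : (x, c) ∈ Ω) :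
    DifferentiableAt ℝ (fun t => pdx u (t, c)) x := by
  have hF : ContDiffOn ℝ 1 (fun q => fderiv ℝ u q (1, 0)) Ω :=
    (hu.fderiv_of_isOpen hΩ (by norm_num)).clm_apply contDiffOn_const
  have hFd : DifferentiableAt ℝ (fun q => fderiv ℝ u q (1, 0)) (x, c) :=
    (hF.differentiableOn one_ne_zero).differentiableAt (hΩ.mem_nhds h)
  have hslice : DifferentiableAt ℝ (fun t => fderiv ℝ u (t, c) (1, 0)) x :=
    hFd.comp (f := fun t : ℝ => (t, c)) x (differentiableAt_id.prodMk (differentiableAt_const c))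
  apply hslice.congr_of_eventuallyEq
  have hm : {t : ℝ | (t, c) ∈ Ω} ∈ nhds x := (hΩ.preimage (by fun_prop)).mem_nhds h
  filter_upwards [hm] with t ht
  have hd : DifferentiableAt ℝ u (t, c) :=
    (hu.differentiableOn (by norm_num)).differentiableAt (hΩ.mem_nhds ht)
  exact (hd.hasFDerivAt.comp_hasDerivAt t ((hasDerivAt_id t).prodMk (hasDerivAt_const t c))).deriv

lemma pdy_sliceY_diff (Ω : Set (ℝ × ℝ)) (hΩ : IsOpen Ω) (u : ℝ × ℝ → ℝ)
    (hu : ContDiffOn ℝ 2 u Ω) (c y : ℝ) (h : (c, y) ∈ Ω) :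
    DifferentiableAt ℝ (fun t => pdy u (c, t)) y := by
  have hF : ContDiffOn ℝ 1 (fun q => fderiv ℝ u q (0, 1)) Ω :=
    (hu.fderiv_of_isOpen hΩ (by norm_num)).clm_apply contDiffOn_const
  have hFd : DifferentiableAt ℝ (fun q => fderiv ℝ u q (0, 1)) (c, y) :=
    (hF.differentiableOn one_ne_zero).differentiableAt (hΩ.mem_nhds h)
  have hslice : DifferentiableAt ℝ (fun t => fderiv ℝ u (c, t) (0, 1)) y :=
    hFd.comp y ((differentiableAt_const c).prodMk differentiableAt_id)
  apply hslice.congr_of_eventuallyEq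
  have hm : {t : ℝ | (c, t) ∈ Ω} ∈ nhds y := (hΩ.preimage (by fun_prop)).mem_nhds h
  filter_upwards [hm] with t ht
  have hd : DifferentiableAt ℝ u (c, t) :=
    (hu.differentiableOn (by norm_num)).differentiableAt (hΩ.mem_nhds ht)
  exact (hd.hasFDerivAt.comp_hasDerivAt t ((hasDerivAt_const t c).prodMk (hasDerivAt_id t))).deriv

/-- Quotient transformation: if `u` solves `div(∇u + W₁u) = W₂·∇u + Vu` and
`φ > 0` solves `Δφ - (W₁+W₂)·∇φ - (V - W₁·W₂)φ = 0`, then `v = u/φ` satisfies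
`div(∇v + W₁v) + W₁·∇v + |W₁|²v = W₃·(∇v + W₁v)` with `W₃ = W₁ + W₂ - 2∇φ/φ`. -/
theorem stmt16 (Ω : Set (ℝ × ℝ)) (hΩ : IsOpen Ω)
    (W11 W12 W21 W22 V u φ : ℝ × ℝ → ℝ)
    (hW11 : ContDiffOn ℝ 1 W11 Ω) (hW12 : ContDiffOn ℝ 1 W12 Ω)
    (hW21 : ContDiffOn ℝ 1 W21 Ω) (hW22 : ContDiffOn ℝ 1 W22 Ω)
    (hV : ContinuousOn V Ω)
    (hu : ContDiffOn ℝ 2 u Ω) (hφ : ContDiffOn ℝ 2 φ Ω)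
    (hφpos : ∀ p ∈ Ω, 0 < φ p)
    (hueq : ∀ p ∈ Ω,
      pdx (fun q => pdx u q + W11 q * u q) p +
          pdy (fun q => pdy u q + W12 q * u q) p =
        (W21 p * pdx u p + W22 p * pdy u p) + V p * u p)
    (hφeq : ∀ p ∈ Ω,
      (pdx (fun q => pdx φ q) p + pdy (fun q => pdy φ q) p) -
          ((W11 p + W21 p) * pdx φ p + (W12 p + W22 p) * pdy φ p) -
          (V p - (W11 p * W21 p + W12 p * W22 p)) * φ p = 0) :
    let v : ℝ × ℝ → ℝ := fun q => u q / φ q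
    ∀ p ∈ Ω,
      pdx (fun q => pdx v q + W11 q * v q) p +
          pdy (fun q => pdy v q + W12 q * v q) p +
          (W11 p * pdx v p + W12 p * pdy v p) +
          (W11 p ^ 2 + W12 p ^ 2) * v p =
        (W11 p + W21 p - 2 * pdx φ p / φ p) * (pdx v p + W11 p * v p) +
          (W12 p + W22 p - 2 * pdy φ p / φ p) * (pdy v p + W12 p * v p) := by
  intro v p hp
  obtain ⟨p1, p2⟩ := p
  have hud : ∀ q ∈ Ω, DifferentiableAt ℝ u q := fun q hq =>
    (hu.differentiableOn (by norm_num)).differentiableAt (hΩ.mem_nhds hq)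
  have hφd : ∀ q ∈ Ω, DifferentiableAt ℝ φ q := fun q hq =>
    (hφ.differentiableOn (by norm_num)).differentiableAt (hΩ.mem_nhds hq)
  have hsx : IsOpen {x : ℝ | (x, p2) ∈ Ω} := hΩ.preimage (by fun_prop)
  have hsy : IsOpen {y : ℝ | (p1, y) ∈ Ω} := hΩ.preimage (by fun_prop)
  have hpx : p1 ∈ {x : ℝ | (x, p2) ∈ Ω} := hp
  have hpy : p2 ∈ {y : ℝ | (p1, y) ∈ Ω} := hp
  have hUx : ∀ x ∈ {x : ℝ | (x, p2) ∈ Ω}, HasDerivAt (fun t => u (t, p2)) (pdx u (x, p2)) x :=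
    fun x hx => sliceX_hasDerivAt u x p2 (hud _ hx)
  have hPx : ∀ x ∈ {x : ℝ | (x, p2) ∈ Ω}, HasDerivAt (fun t => φ (t, p2)) (pdx φ (x, p2)) x :=
    fun x hx => sliceX_hasDerivAt φ x p2 (hφd _ hx)
  have hUy : ∀ y ∈ {y : ℝ | (p1, y) ∈ Ω}, HasDerivAt (fun t => u (p1, t)) (pdy u (p1, y)) y :=
    fun y hy => sliceY_hasDerivAt u p1 y (hud _ hy)
  have hPy : ∀ y ∈ {y : ℝ | (p1, y) ∈ Ω}, HasDerivAt (fun t => φ (p1, t)) (pdy φ (p1, y)) y :=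
    fun y hy => sliceY_hasDerivAt φ p1 y (hφd _ hy)
  have hnex : ∀ x ∈ {x : ℝ | (x, p2) ∈ Ω}, φ (x, p2) ≠ 0 := fun x hx => (hφpos _ hx).ne'
  have hney : ∀ y ∈ {y : ℝ | (p1, y) ∈ Ω}, φ (p1, y) ≠ 0 := fun y hy => (hφpos _ hy).ne'
  have hduxx : DifferentiableAt ℝ (fun t => pdx u (t, p2)) p1 :=
    pdx_sliceX_diff Ω hΩ u hu p1 p2 hp
  have hdfxx : DifferentiableAt ℝ (fun t => pdx φ (t, p2)) p1 :=
    pdx_sliceX_diff Ω hΩ φ hφ p1 p2 hp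
  have hduyy : DifferentiableAt ℝ (fun t => pdy u (p1, t)) p2 :=
    pdy_sliceY_diff Ω hΩ u hu p1 p2 hp
  have hdfyy : DifferentiableAt ℝ (fun t => pdy φ (p1, t)) p2 :=
    pdy_sliceY_diff Ω hΩ φ hφ p1 p2 hp
  have hdax : DifferentiableAt ℝ (fun t => W11 (t, p2)) p1 :=
    ((hW11.differentiableOn one_ne_zero).differentiableAt (hΩ.mem_nhds hp)).comp p1
      (differentiableAt_id.prodMk (differentiableAt_const p2))
  have hday : DifferentiableAt ℝ (fun t => W12 (p1, t)) p2 :=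
    ((hW12.differentiableOn one_ne_zero).differentiableAt (hΩ.mem_nhds hp)).comp p2
      ((differentiableAt_const p1).prodMk differentiableAt_id)
  have hDx : pdx (fun q => pdx v q + W11 q * v q) (p1, p2) =
      ((deriv (fun t => pdx u (t, p2)) p1 * φ (p1, p2)
            - u (p1, p2) * deriv (fun t => pdx φ (t, p2)) p1) * φ (p1, p2) ^ 2
          - (pdx u (p1, p2) * φ (p1, p2) - u (p1, p2) * pdx φ (p1, p2))
            * (2 * φ (p1, p2) * pdx φ (p1, p2))) / (φ (p1, p2) ^ 2) ^ 2
        + (deriv (fun t => W11 (t, p2)) p1 * (u (p1, p2) / φ (p1, p2))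
          + W11 (p1, p2) * ((pdx u (p1, p2) * φ (p1, p2) - u (p1, p2) * pdx φ (p1, p2))
            / φ (p1, p2) ^ 2)) :=
    quotient_slice_deriv (fun t => u (t, p2)) (fun t => φ (t, p2)) (fun t => W11 (t, p2))
      (fun t => pdx u (t, p2)) (fun t => pdx φ (t, p2)) _ hsx p1 hpx hUx hPx hnex hduxx
      hdfxx hdax
  have hDy : pdy (fun q => pdy v q + W12 q * v q) (p1, p2) =
      ((deriv (fun t => pdy u (p1, t)) p2 * φ (p1, p2)
            - u (p1, p2) * deriv (fun t => pdy φ (p1, t)) p2) * φ (p1, p2) ^ 2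
          - (pdy u (p1, p2) * φ (p1, p2) - u (p1, p2) * pdy φ (p1, p2))
            * (2 * φ (p1, p2) * pdy φ (p1, p2))) / (φ (p1, p2) ^ 2) ^ 2
        + (deriv (fun t => W12 (p1, t)) p2 * (u (p1, p2) / φ (p1, p2))
          + W12 (p1, p2) * ((pdy u (p1, p2) * φ (p1, p2) - u (p1, p2) * pdy φ (p1, p2))
            / φ (p1, p2) ^ 2)) :=
    quotient_slice_deriv (fun t => u (p1, t)) (fun t => φ (p1, t)) (fun t => W12 (p1, t))
      (fun t => pdy u (p1, t)) (fun t => pdy φ (p1, t)) _ hsy p2 hpy hUy hPy hney hduyy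
      hdfyy hday
  have hvx : pdx v (p1, p2) =
      (pdx u (p1, p2) * φ (p1, p2) - u (p1, p2) * pdx φ (p1, p2)) / φ (p1, p2) ^ 2 :=
    ((hUx p1 hpx).div (hPx p1 hpx) (hnex p1 hpx)).deriv
  have hvy : pdy v (p1, p2) =
      (pdy u (p1, p2) * φ (p1, p2) - u (p1, p2) * pdy φ (p1, p2)) / φ (p1, p2) ^ 2 :=
    ((hUy p2 hpy).div (hPy p2 hpy) (hney p2 hpy)).deriv
  have hv : v (p1, p2) = u (p1, p2) / φ (p1, p2) := rfl
  have hueq' := hueq (p1, p2) hp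
  have e1 : pdx (fun q => pdx u q + W11 q * u q) (p1, p2) =
      deriv (fun t => pdx u (t, p2)) p1 +
        (deriv (fun t => W11 (t, p2)) p1 * u (p1, p2) + W11 (p1, p2) * pdx u (p1, p2)) :=
    (hduxx.hasDerivAt.add (hdax.hasDerivAt.mul (hUx p1 hpx))).deriv
  have e2 : pdy (fun q => pdy u q + W12 q * u q) (p1, p2) =
      deriv (fun t => pdy u (p1, t)) p2 +
        (deriv (fun t => W12 (p1, t)) p2 * u (p1, p2) + W12 (p1, p2) * pdy u (p1, p2)) :=
    (hduyy.hasDerivAt.add (hday.hasDerivAt.mul (hUy p2 hpy))).deriv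
  rw [e1, e2] at hueq'
  have hφeq' := hφeq (p1, p2) hp
  have e3 : pdx (fun q => pdx φ q) (p1, p2) = deriv (fun t => pdx φ (t, p2)) p1 := rfl
  have e4 : pdy (fun q => pdy φ q) (p1, p2) = deriv (fun t => pdy φ (p1, t)) p2 := rfl
  rw [e3, e4] at hφeq'
  rw [hDx, hDy, hvx, hvy, hv]
  exact alg16 (u (p1, p2)) (pdx u (p1, p2)) (pdy u (p1, p2))
    (deriv (fun t => pdx u (t, p2)) p1) (deriv (fun t => pdy u (p1, t)) p2)
    (φ (p1, p2)) (pdx φ (p1, p2)) (pdy φ (p1, p2))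
    (deriv (fun t => pdx φ (t, p2)) p1) (deriv (fun t => pdy φ (p1, t)) p2)
    (W11 (p1, p2)) (W12 (p1, p2)) (W21 (p1, p2)) (W22 (p1, p2))
    (deriv (fun t => W11 (t, p2)) p1) (deriv (fun t => W12 (p1, t)) p2) (V (p1, p2))
    ((hφpos _ hp).ne') hueq' hφeq'
end
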